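/- arXiv:2409.06199 — 8 statements merged into one kernel-verified Lean document; each statement's English description precedes it below -/
import Mathlib

section
/- (Steady algorithm gap size upper bound.) Let ŝ ∈ ℕ with ŝ ≥ 2, set S = 2^ŝ, and let T ∈ ℕ with T ≥ S. Let t = ⌊log₂ T⌋ − ŝ + 1 (the current epoch). Suppose B ⊆ {0,…,T−1} contains every index T̆ < T with hanoi value H(T̆) ≥ t (the retention invariant maintained by the steady curation algorithm). Then for every gap, i.e., every a, L ∈ ℕ with a + L ≤ T and {a,…,a+L−1} ∩ B = ∅, one has L ≤ 2^t − 1 and, as rational numbers, L ≤ 2·((S+1)/S)·⌊T/(S+1)⌋ + 1. That is, the steady cost satisfies cost_steady(T) ≤ 2·((S+1)/S)·ĝ + 1 where ĝ = ⌊T/(S+1)⌋ is the optimal lower bound on maximum gap size. -/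
/-- steady algorithm gap size upper bound. With `S = 2^s'`, `T ≥ S`,
epoch `t = ⌊log₂ T⌋ − s' + 1`, and all items of hanoi value `≥ t` retained,
every gap has size `L ≤ 2^t − 1` and (as rationals)
`L ≤ 2·((S+1)/S)·⌊T/(S+1)⌋ + 1`. -/
theorem steady_gap_size_upper_bound (s' S T t : ℕ) (hs' : 2 ≤ s')
    (hS : S = 2 ^ s') (hT : S ≤ T) (ht : t = Nat.log 2 T - s' + 1)
    (B : Finset ℕ) (hB : B ⊆ Finset.range T)
    (hret : ∀ T' < T, t ≤ padicValNat 2 (T' + 1) → T' ∈ B) :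
    ∀ a L : ℕ, a + L ≤ T → (∀ x ∈ Finset.Ico a (a + L), x ∉ B) →
      L ≤ 2 ^ t - 1 ∧
      (L : ℚ) ≤ 2 * (((S : ℚ) + 1) / (S : ℚ)) * ((T / (S + 1) : ℕ) : ℚ) + 1 := by
  intro a L haL hgap
  have hm : 0 < 2 ^ t := Nat.pow_pos (by norm_num)
  set m := 2 ^ t with hmdef
  -- Part 1
  have h1 : L ≤ m - 1 := by
    by_contra h
    push_neg at h
    have hL : m ≤ L := by omega
    set x := (a / m + 1) * m - 1 with hx
    have hx1 : (a / m + 1) * m = m * (a / m) + m := by ring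
    have hmod := Nat.div_add_mod a m
    have hlt := Nat.mod_lt a hm
    have hax : a ≤ x ∧ x < a + m := by omega
    have hx2 : m * (a / m + 1) = m * (a / m) + m := by ring
    have hdvd : m ∣ x + 1 := ⟨a / m + 1, by omega⟩
    have hxT : x < T := by omega
    have hval : t ≤ padicValNat 2 (x + 1) := by
      haveI : Fact (Nat.Prime 2) := ⟨Nat.prime_two⟩
      have hne : x + 1 ≠ 0 := by omega
      exact (padicValNat_dvd_iff_le hne).mp hdvd
    have hxB : x ∈ B := hret x hxT hval
    exact hgap x (Finset.mem_Ico.mpr ⟨hax.1, by omega⟩) hxB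
  refine ⟨h1, ?_⟩
  -- Part 2
  have hs'log : s' ≤ Nat.log 2 T := Nat.le_log_of_pow_le (by norm_num) (hS ▸ hT)
  have hts : t + s' = Nat.log 2 T + 1 := by omega
  have hT0 : 0 < T := lt_of_lt_of_le (hS ▸ pow_pos two_pos s') hT
  have hpow : 2 ^ Nat.log 2 T ≤ T := Nat.pow_log_le_self 2 hT0.ne'
  have hkey1 : m * S ≤ 2 * T := by
    have : m * S = 2 * 2 ^ Nat.log 2 T := by
      rw [hmdef, hS, ← pow_add, hts, pow_succ]; ring
    omega
  have hkey2 : T ≤ (S + 1) * (T / (S + 1)) + S := by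
    have := Nat.div_add_mod T (S + 1)
    have := Nat.mod_lt T (show 0 < S + 1 by omega)
    omega
  have hassoc : 2 * ((S + 1) * (T / (S + 1))) = 2 * (S + 1) * (T / (S + 1)) := by ring
  have hkey : m * S ≤ 2 * (S + 1) * (T / (S + 1)) + 2 * S := by omega
  have hSpos : (0 : ℚ) < (S : ℚ) := by
    have : 0 < S := by rw [hS]; positivity
    exact_mod_cast this
  have hc : (m : ℚ) * S ≤ 2 * ((S : ℚ) + 1) * ((T / (S + 1) : ℕ) : ℚ) + 2 * S := by
    exact_mod_cast hkey
  have hL' : (L : ℚ) + 1 ≤ (m : ℚ) := by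
    have : L + 1 ≤ m := by omega
    exact_mod_cast this
  set g : ℚ := ((T / (S + 1) : ℕ) : ℚ) with hg
  rw [show 2 * (((S : ℚ) + 1) / S) * g + 1 = (2 * ((S : ℚ) + 1) * g + S) / S from by
    field_simp]
  rw [le_div_iff₀ hSpos]
  nlinarith
end

section
/- (Space required to store goal_stretched.) Let ŝ, τ, t, T ∈ ℕ with ŝ ≥ 2, τ ≤ ŝ − 1, t ≤ 2^(τ+1) − τ − 2, and T ≤ 2^(ŝ+t). Set n = 2^(ŝ−1−τ). Then the set consisting, for each hanoi value h, of the first n indices with hanoi value h that are below T has at most 2^ŝ elements. Equivalently, |{T̆ ∈ {0,…,T−1} : ⌊T̆ / 2^(H(T̆)+1)⌋ < n}| ≤ 2^ŝ, where ⌊T̆ / 2^(H(T̆)+1)⌋ is the number of earlier indices sharing hanoi value H(T̆); equivalently, |⋃_{h ∈ ℕ} {i·2^(h+1) + 2^h − 1 : i < n} ∩ {0,…,T−1}| ≤ 2^ŝ. -/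
lemma gs_div_helper (m q r x : ℕ) (hx : x = m * q + r) (hr : r < m) : x / m = q := by
  subst hx
  rw [Nat.mul_add_div (by omega), Nat.div_eq_of_lt hr, add_zero]

lemma gs_hanoi_mod (x h : ℕ) (hx : padicValNat 2 (x + 1) = h) :
    (x + 1) % 2 ^ (h + 1) = 2 ^ h := by
  have h1 : 2 ^ h ∣ x + 1 := hx ▸ pow_padicValNat_dvd
  obtain ⟨m, hm⟩ := h1
  have hodd : m % 2 = 1 := by
    rcases Nat.mod_two_eq_zero_or_one m with h0 | h1
    · exfalso
      obtain ⟨c, hc⟩ := Nat.dvd_of_mod_eq_zero h0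
      have h2 : 2 ^ (h + 1) ∣ x + 1 := ⟨c, by rw [hm, hc, pow_succ]; ring⟩
      exact pow_succ_padicValNat_not_dvd (by omega) (hx ▸ h2)
    · exact h1
  rw [hm, pow_succ, Nat.mul_mod_mul_left, hodd, mul_one]

lemma gs_hanoi_rep (x h : ℕ) (hx : padicValNat 2 (x + 1) = h) :
    x = x / 2 ^ (h + 1) * 2 ^ (h + 1) + (2 ^ h - 1) := by
  have hm : (x + 1) % 2 ^ (h + 1) = 2 ^ h := gs_hanoi_mod x h hx
  have h2 := Nat.div_add_mod (x + 1) (2 ^ (h + 1))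
  have hone : (1 : ℕ) ≤ 2 ^ h := Nat.one_le_two_pow
  have hlt : 2 ^ h - 1 < 2 ^ (h + 1) := by
    have : 2 ^ h < 2 ^ (h + 1) := Nat.pow_lt_pow_succ (by norm_num)
    omega
  have key : x = 2 ^ (h + 1) * ((x + 1) / 2 ^ (h + 1)) + (2 ^ h - 1) := by omega
  have hdiv : x / 2 ^ (h + 1) = (x + 1) / 2 ^ (h + 1) := gs_div_helper _ _ _ _ key hlt
  have hc : (x + 1) / 2 ^ (h + 1) * 2 ^ (h + 1) =
      2 ^ (h + 1) * ((x + 1) / 2 ^ (h + 1)) := Nat.mul_comm _ _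
  rw [hdiv]
  omega

/-- space required to store `goal_stretched`. With
`n = 2^(s'−1−τ)`, the set of the first `n` indices of each hanoi value below
`T ≤ 2^(s'+t)` has at most `2^s'` elements. An index `T'` is among the first `n`
of its hanoi value iff `⌊T' / 2^(H(T')+1)⌋ < n`. -/
theorem goal_stretched_space (s' τ t T n : ℕ) (hs' : 2 ≤ s') (hτ : τ ≤ s' - 1)
    (ht : t ≤ 2 ^ (τ + 1) - τ - 2) (hT : T ≤ 2 ^ (s' + t))
    (hn : n = 2 ^ (s' - 1 - τ)) :
    ((Finset.range T).filter
      fun T' => T' / 2 ^ (padicValNat 2 (T' + 1) + 1) < n).card ≤ 2 ^ s' := by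
  classical
  set K := t + τ + 1 with hK
  have hpos : 0 < 2 ^ K := by positivity
  have hTn : T ≤ n * 2 ^ K := by
    have : n * 2 ^ K = 2 ^ (s' + t) := by
      rw [hn, ← pow_add]
      congr 1
      omega
    omega
  have hsub : ((Finset.range T).filter
      fun T' => T' / 2 ^ (padicValNat 2 (T' + 1) + 1) < n) ⊆
      ((Finset.range K).biUnion fun h => (Finset.range T).filter
        fun T' => padicValNat 2 (T' + 1) = h ∧ T' / 2 ^ (h + 1) < n) ∪
      (Finset.range T).filter fun T' => K ≤ padicValNat 2 (T' + 1) := by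
    intro x hx
    simp only [Finset.mem_filter, Finset.mem_range] at hx
    by_cases hc : padicValNat 2 (x + 1) < K
    · refine Finset.mem_union_left _ ?_
      simp only [Finset.mem_biUnion, Finset.mem_range, Finset.mem_filter]
      exact ⟨_, hc, hx.1, rfl, hx.2⟩
    · refine Finset.mem_union_right _ ?_
      simp only [Finset.mem_filter, Finset.mem_range]
      exact ⟨hx.1, by omega⟩
  have hcardA : ∀ h, ((Finset.range T).filter
      fun T' => padicValNat 2 (T' + 1) = h ∧ T' / 2 ^ (h + 1) < n).card ≤ n := by
    intro h
    have : ((Finset.range T).filter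
        fun T' => padicValNat 2 (T' + 1) = h ∧ T' / 2 ^ (h + 1) < n).card ≤
        (Finset.range n).card := by
      apply Finset.card_le_card_of_injOn (fun x => x / 2 ^ (h + 1))
      · intro x hx
        simp only [Finset.mem_coe, Finset.mem_filter, Finset.mem_range] at hx ⊢
        exact hx.2.2
      · intro a ha b hb hab
        simp only [Finset.coe_filter, Set.mem_setOf_eq, Finset.mem_range] at ha hb
        have hab' : a / 2 ^ (h + 1) = b / 2 ^ (h + 1) := hab
        have ra := gs_hanoi_rep a h ha.2.1
        have rb := gs_hanoi_rep b h hb.2.1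
        have hmul : a / 2 ^ (h + 1) * 2 ^ (h + 1) = b / 2 ^ (h + 1) * 2 ^ (h + 1) := by
          rw [hab']
        omega
    simpa using this
  have hcardB : ((Finset.range T).filter
      fun T' => K ≤ padicValNat 2 (T' + 1)).card ≤ n := by
    have : ((Finset.range T).filter
        fun T' => K ≤ padicValNat 2 (T' + 1)).card ≤ (Finset.range n).card := by
      apply Finset.card_le_card_of_injOn (fun x => (x + 1) / 2 ^ K - 1)
      · intro x hx
        simp only [Finset.mem_coe, Finset.mem_filter, Finset.mem_range] at hx ⊢
        have hdvd : 2 ^ K ∣ x + 1 :=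
          dvd_trans (pow_dvd_pow 2 hx.2) pow_padicValNat_dvd
        obtain ⟨q, hq⟩ := hdvd
        have hq1 : 1 ≤ q := by
          rcases Nat.eq_zero_or_pos q with h0 | h1
          · subst h0; simp at hq
          · exact h1
        have hqn : q ≤ n := by
          refine Nat.le_of_mul_le_mul_left ?_ hpos
          have hcm : n * 2 ^ K = 2 ^ K * n := Nat.mul_comm _ _
          omega
        rw [hq, Nat.mul_div_cancel_left _ hpos]
        omega
      · intro a ha b hb hab
        simp only [Finset.coe_filter, Set.mem_setOf_eq, Finset.mem_range] at ha hb
        have hab' : (a + 1) / 2 ^ K - 1 = (b + 1) / 2 ^ K - 1 := hab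
        obtain ⟨qa, hqa⟩ : 2 ^ K ∣ a + 1 :=
          dvd_trans (pow_dvd_pow 2 ha.2) pow_padicValNat_dvd
        obtain ⟨qb, hqb⟩ : 2 ^ K ∣ b + 1 :=
          dvd_trans (pow_dvd_pow 2 hb.2) pow_padicValNat_dvd
        rw [hqa, hqb, Nat.mul_div_cancel_left _ hpos, Nat.mul_div_cancel_left _ hpos]
          at hab'
        have ha1 : 1 ≤ qa := by
          rcases Nat.eq_zero_or_pos qa with h0 | h1
          · subst h0; simp at hqa
          · exact h1
        have hb1 : 1 ≤ qb := by
          rcases Nat.eq_zero_or_pos qb with h0 | h1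
          · subst h0; simp at hqb
          · exact h1
        have hqq : qa = qb := by omega
        subst hqq
        omega
    simpa using this
  have hbig : ((Finset.range K).biUnion fun h => (Finset.range T).filter
      fun T' => padicValNat 2 (T' + 1) = h ∧ T' / 2 ^ (h + 1) < n).card ≤ K * n := by
    calc ((Finset.range K).biUnion fun h => (Finset.range T).filter
        fun T' => padicValNat 2 (T' + 1) = h ∧ T' / 2 ^ (h + 1) < n).card
        ≤ ∑ h ∈ Finset.range K, ((Finset.range T).filter
          fun T' => padicValNat 2 (T' + 1) = h ∧ T' / 2 ^ (h + 1) < n).card :=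
        Finset.card_biUnion_le
      _ ≤ ∑ _h ∈ Finset.range K, n := Finset.sum_le_sum fun h _ => hcardA h
      _ = K * n := by simp [mul_comm]
  calc ((Finset.range T).filter
      fun T' => T' / 2 ^ (padicValNat 2 (T' + 1) + 1) < n).card
      ≤ _ := Finset.card_le_card hsub
    _ ≤ ((Finset.range K).biUnion fun h => (Finset.range T).filter
        fun T' => padicValNat 2 (T' + 1) = h ∧ T' / 2 ^ (h + 1) < n).card +
        ((Finset.range T).filter fun T' => K ≤ padicValNat 2 (T' + 1)).card :=
      Finset.card_union_le _ _
    _ ≤ K * n + n := Nat.add_le_add hbig hcardB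
    _ = (K + 1) * n := by ring
    _ ≤ 2 ^ (τ + 1) * n := by
        have hτ2 : τ + 2 ≤ 2 ^ (τ + 1) := by
          have := Nat.lt_two_pow_self (n := τ + 1)
          omega
        have hK1 : K + 1 ≤ 2 ^ (τ + 1) := by omega
        exact Nat.mul_le_mul_right n hK1
    _ = 2 ^ s' := by
        rw [hn, ← pow_add]
        congr 1
        omega
end

section
/- (Stretched algorithm retained data items.) For every n ∈ ℕ with n ≥ 1, the following two subsets of ℕ are equal: {i·2^(h+1) + 2^h − 1 : i, h ∈ ℕ, i ≤ n−1} (the first n indices of each hanoi value h) and {j·2^h − 1 : j, h ∈ ℕ, 1 ≤ j ≤ 2n}. -/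
/-- stretched algorithm retained data items. For `n ≥ 1`, the set
of the first `n` indices of each hanoi value equals
`{j·2^h − 1 : 1 ≤ j ≤ 2n, h ∈ ℕ}`. -/
theorem stretched_retained_equivalence (n : ℕ) (hn : 1 ≤ n) :
    {x : ℕ | ∃ i h : ℕ, i ≤ n - 1 ∧ x = i * 2 ^ (h + 1) + 2 ^ h - 1} =
    {x : ℕ | ∃ j h : ℕ, 1 ≤ j ∧ j ≤ 2 * n ∧ x = j * 2 ^ h - 1} := by
  ext x
  simp only [Set.mem_setOf_eq]
  constructor
  · rintro ⟨i, h, hi, rfl⟩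
    refine ⟨2 * i + 1, h, by omega, by omega, ?_⟩
    have : (2 * i + 1) * 2 ^ h = i * 2 ^ (h + 1) + 2 ^ h := by ring
    omega
  · rintro ⟨j, h, hj1, hj2, rfl⟩
    obtain ⟨k, m, hm, rfl⟩ := Nat.exists_eq_two_pow_mul_odd (Nat.one_le_iff_ne_zero.mp hj1)
    obtain ⟨i, rfl⟩ := hm
    refine ⟨i, h + k, ?_, ?_⟩
    · have h1 : 1 ≤ 2 ^ k := Nat.one_le_two_pow
      have : 2 * i + 1 ≤ 2 ^ k * (2 * i + 1) := Nat.le_mul_of_pos_left _ h1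
      omega
    · have : 2 ^ k * (2 * i + 1) * 2 ^ h = i * 2 ^ (h + k + 1) + 2 ^ (h + k) := by
        ring
      omega
end

section
/- (Stretched gap size ratio given first n items per hanoi value.) Let n, T ∈ ℕ with n ≥ 1, let W = {j·2^h − 1 : j, h ∈ ℕ, 1 ≤ j ≤ 2n}, and let B ⊆ {0,…,T−1} contain every element of W that is less than T. Then for every T̆ with 1 ≤ T̆ < T and all i, j ∈ ℕ with i ≤ T̆, T̆ + j ≤ T, and {T̆−i, …, T̆+j−1} ∩ B = ∅, we have n·(i + j) ≤ T̆. That is, the gap size ratio satisfies G_T(T̆)/T̆ ≤ 1/n for all T̆ ∈ [1, T). -/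
/-- stretched gap size ratio given first `n` items per hanoi
value. If `B` retains every `j·2^h − 1 < T` with `1 ≤ j ≤ 2n`, then every gap
`[T'−i, T'+j)` around any `1 ≤ T' < T` satisfies `n·(i+j) ≤ T'`, i.e. the gap
size ratio is at most `1/n`. -/
theorem stretched_gap_size_ratio (n T : ℕ) (hn : 1 ≤ n)
    (B : Finset ℕ) (hB : B ⊆ Finset.range T)
    (hret : ∀ x : ℕ,
      (∃ j h : ℕ, 1 ≤ j ∧ j ≤ 2 * n ∧ x = j * 2 ^ h - 1) → x < T → x ∈ B) :
    ∀ T', 1 ≤ T' → T' < T → ∀ i j : ℕ, i ≤ T' → T' + j ≤ T →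
      (∀ x ∈ Finset.Ico (T' - i) (T' + j), x ∉ B) → n * (i + j) ≤ T' := by
  intro T' hT'1 hT'T i j hi hij hgap
  by_contra hcon
  push_neg at hcon
  set L := i + j with hL
  have hL0 : 0 < L := by
    rcases Nat.eq_zero_or_pos L with h0 | h
    · rw [h0, Nat.mul_zero] at hcon; omega
    · exact h
  set h := Nat.log 2 L with hh
  have h1 : 2 ^ h ≤ L := Nat.pow_log_le_self 2 hL0.ne'
  have h2 : L < 2 ^ (h + 1) := Nat.lt_pow_succ_log_self (by norm_num) L
  have hp : 0 < 2 ^ h := Nat.pow_pos (by norm_num)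
  set a := T' - i with ha
  set q := a / 2 ^ h with hq
  set x := (q + 1) * 2 ^ h - 1 with hx
  have hexp : (q + 1) * 2 ^ h = 2 ^ h * q + 2 ^ h := by ring
  have hx1 : x + 1 = 2 ^ h * q + 2 ^ h := by
    rw [hx, hexp]; omega
  have hdm : 2 ^ h * q + a % 2 ^ h = a := Nat.div_add_mod a (2 ^ h)
  have hmod : a % 2 ^ h < 2 ^ h := Nat.mod_lt _ hp
  have hax : a ≤ x := by omega
  have hqle : 2 ^ h * q ≤ a := by omega
  have haL : a + L = T' + j := by omega
  have hxb : x + 1 ≤ T' + j := by omega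
  -- q + 1 ≤ 2 * n
  have hnl : n * L < n * 2 ^ (h + 1) := Nat.mul_lt_mul_of_pos_left h2 (by omega)
  have hpow : n * 2 ^ (h + 1) = 2 * n * 2 ^ h := by ring
  have haless : a < 2 * n * 2 ^ h := by
    have h3 : a ≤ T' := Nat.sub_le _ _
    omega
  have hq2n : q < 2 * n := by
    rw [hq]
    exact (Nat.div_lt_iff_lt_mul hp).mpr haless
  have hxB : x ∈ B := by
    apply hret x ⟨q + 1, h, Nat.le_add_left 1 q, hq2n, rfl⟩
    omega
  exact hgap x (Finset.mem_Ico.mpr ⟨hax, by omega⟩) hxB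
end

section
/- (Tilted algorithm retained data items.) Let T ∈ ℕ and n ∈ ℕ with n ≥ 1. Working in ℤ with floor division ⌊·/·⌋, define A = {2^(h+1)·(⌊(T − 2^h)/2^(h+1)⌋ − j) + 2^h − 1 : h ∈ ℕ, j ∈ ℕ, j ≤ n−1} (the most recent n indices of each hanoi value before time T) and C = {2^h·(⌊T/2^h⌋ − j') − 1 : h ∈ ℕ, j' ∈ ℕ, j' ≤ 2n−1}. Then A ⊆ C, and every nonnegative element of C belongs to A; in particular A ∩ {x ∈ ℤ : x ≥ 0} = C ∩ {x ∈ ℤ : x ≥ 0}. -/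
private lemma ediv_succ_aux (t : ℤ) (h : ℕ) : t / 2 ^ (h + 1) = (t / 2 ^ h) / 2 := by
  have hp : (0:ℤ) < 2 ^ h := by positivity
  set m := t / 2 ^ h with hm
  set r := t % 2 ^ h with hr
  have hr0 : 0 ≤ r := Int.emod_nonneg t hp.ne'
  have hr1 : r < 2 ^ h := Int.emod_lt_of_pos t hp
  have ht : 2 ^ h * m + r = t := Int.mul_ediv_add_emod t (2 ^ h)
  set q := m / 2 with hq
  set s := m % 2 with hs
  have hs0 : 0 ≤ s := Int.emod_nonneg _ two_ne_zero
  have hs1 : s < 2 := Int.emod_lt_of_pos _ two_pos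
  have hmq : 2 * q + s = m := Int.mul_ediv_add_emod m 2
  have key : t = (s * 2 ^ h + r) + q * 2 ^ (h + 1) := by
    rw [pow_succ]
    linear_combination -ht - (2:ℤ) ^ h * hmq
  rw [key, Int.add_mul_ediv_right _ _ (by positivity : ((2:ℤ) ^ (h+1)) ≠ 0)]
  have hz : (s * 2 ^ h + r) / 2 ^ (h + 1) = 0 := by
    apply Int.ediv_eq_zero_of_lt
    · nlinarith
    · rw [pow_succ]; nlinarith
  rw [hz, zero_add]

private lemma fdiv_step_aux (t : ℤ) (h : ℕ) :
    (t - 2 ^ h).fdiv (2 ^ (h + 1)) = (t / 2 ^ h - 1) / 2 := by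
  rw [Int.fdiv_eq_ediv_of_nonneg _ (by positivity), ediv_succ_aux]
  congr 1
  have : (t + (-1) * 2 ^ h) / 2 ^ h = t / 2 ^ h + (-1) :=
    Int.add_mul_ediv_right t (-1) (by positivity : ((2:ℤ) ^ h) ≠ 0)
  have e : t - 2 ^ h = t + (-1) * 2 ^ h := by ring
  rw [e, this]; ring

private lemma forward_aux (t : ℤ) (n h j : ℕ) (hn : 1 ≤ n) (hj : j ≤ n - 1) :
    ∃ j' : ℕ, j' ≤ 2 * n - 1 ∧
      2 ^ (h + 1) * ((t - 2 ^ h).fdiv (2 ^ (h + 1)) - (j : ℤ)) + 2 ^ h - 1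
        = 2 ^ h * (t / 2 ^ h - (j' : ℤ)) - 1 := by
  rw [fdiv_step_aux]
  set m := t / 2 ^ h with hm
  rcases Int.emod_two_eq m with hpar | hpar
  · refine ⟨2 * j + 1, by omega, ?_⟩
    have h2 : 2 * ((m - 1) / 2) = m - 2 := by omega
    push_cast
    rw [pow_succ]
    linear_combination (2:ℤ) ^ h * h2
  · refine ⟨2 * j, by omega, ?_⟩
    have h2 : 2 * ((m - 1) / 2) = m - 1 := by omega
    push_cast
    rw [pow_succ]
    linear_combination (2:ℤ) ^ h * h2

private lemma backward_aux (t : ℤ) (n : ℕ) (hn : 1 ≤ n) :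
    ∀ (k h j' : ℕ), j' ≤ 2 * n - 1 → (t / 2 ^ h - (j' : ℤ)).toNat ≤ k →
      1 ≤ t / 2 ^ h - (j' : ℤ) →
      ∃ h2 j : ℕ, j ≤ n - 1 ∧
        2 ^ h * (t / 2 ^ h - (j' : ℤ)) - 1
          = 2 ^ (h2 + 1) * ((t - 2 ^ h2).fdiv (2 ^ (h2 + 1)) - (j : ℤ)) + 2 ^ h2 - 1 := by
  intro k
  induction k with
  | zero => intro h j' _ hk hpos; exfalso; omega
  | succ k ih =>
    intro h j' hj' hk hpos
    set m := t / 2 ^ h with hm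
    have hcast : ((j' / 2 : ℕ) : ℤ) = (j' : ℤ) / 2 := by
      exact_mod_cast Int.natCast_ediv j' 2
    rcases Int.emod_two_eq (m - (j' : ℤ)) with hpar | hpar
    · -- even difference: recurse at level h + 1 with j'' = j' / 2
      have hstep : t / 2 ^ (h + 1) = m / 2 := by rw [ediv_succ_aux, hm]
      have e1 : t / 2 ^ (h + 1) - ((j' / 2 : ℕ) : ℤ) = (m - (j' : ℤ)) / 2 := by
        rw [hstep, hcast]; omega
      obtain ⟨h2, j, hj, heq⟩ := ih (h + 1) (j' / 2) (by omega)
        (by rw [e1]; omega) (by rw [e1]; omega)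
      refine ⟨h2, j, hj, ?_⟩
      have e2 : (2:ℤ) ^ h * (m - (j' : ℤ)) =
          2 ^ (h + 1) * (t / 2 ^ (h + 1) - ((j' / 2 : ℕ) : ℤ)) := by
        rw [e1, pow_succ]
        have h3 : m - (j' : ℤ) = 2 * ((m - (j' : ℤ)) / 2) := by omega
        linear_combination (2:ℤ) ^ h * h3
      calc 2 ^ h * (m - (j' : ℤ)) - 1
          = 2 ^ (h + 1) * (t / 2 ^ (h + 1) - ((j' / 2 : ℕ) : ℤ)) - 1 := by rw [e2]
        _ = _ := heq
    · -- odd difference: this is itself an A-element at level h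
      refine ⟨h, j' / 2, by omega, ?_⟩
      rw [fdiv_step_aux, ← hm]
      have hsc : 2 * ((m - 1) / 2 - ((j' / 2 : ℕ) : ℤ)) + 1 = m - (j' : ℤ) := by
        rw [hcast]; omega
      rw [pow_succ]
      linear_combination (-(2:ℤ) ^ h) * hsc

/-- tilted algorithm retained data items. With floor division
`Int.fdiv`, the set `A` of the most recent `n` indices of each hanoi value
before time `T` and the set `C = {2^h·(⌊T/2^h⌋ − j') − 1 : j' ≤ 2n−1}` satisfy
`A ⊆ C`, every nonnegative element of `C` lies in `A`, and their nonnegative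
parts coincide. -/
theorem tilted_retained_equivalence (T n : ℕ) (hn : 1 ≤ n) (A C : Set ℤ)
    (hA : A = {x : ℤ | ∃ h j : ℕ, j ≤ n - 1 ∧
      x = 2 ^ (h + 1) * (Int.fdiv ((T : ℤ) - 2 ^ h) (2 ^ (h + 1)) - (j : ℤ))
        + 2 ^ h - 1})
    (hC : C = {x : ℤ | ∃ h j' : ℕ, j' ≤ 2 * n - 1 ∧
      x = 2 ^ h * (Int.fdiv (T : ℤ) (2 ^ h) - (j' : ℤ)) - 1}) :
    A ⊆ C ∧ (∀ x ∈ C, 0 ≤ x → x ∈ A) ∧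
      A ∩ {x : ℤ | 0 ≤ x} = C ∩ {x : ℤ | 0 ≤ x} := by
  subst hA hC
  have hfd : ∀ h : ℕ, Int.fdiv (T : ℤ) (2 ^ h) = (T : ℤ) / 2 ^ h := fun h =>
    Int.fdiv_eq_ediv_of_nonneg _ (by positivity)
  have hAC : {x : ℤ | ∃ h j : ℕ, j ≤ n - 1 ∧
      x = 2 ^ (h + 1) * (Int.fdiv ((T : ℤ) - 2 ^ h) (2 ^ (h + 1)) - (j : ℤ))
        + 2 ^ h - 1} ⊆ {x : ℤ | ∃ h j' : ℕ, j' ≤ 2 * n - 1 ∧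
      x = 2 ^ h * (Int.fdiv (T : ℤ) (2 ^ h) - (j' : ℤ)) - 1} := by
    rintro x ⟨h, j, hj, rfl⟩
    obtain ⟨j', hj', heq⟩ := forward_aux (T : ℤ) n h j hn hj
    exact ⟨h, j', hj', by rw [hfd h]; exact heq⟩
  have hCA : ∀ x ∈ {x : ℤ | ∃ h j' : ℕ, j' ≤ 2 * n - 1 ∧
      x = 2 ^ h * (Int.fdiv (T : ℤ) (2 ^ h) - (j' : ℤ)) - 1}, 0 ≤ x →
      x ∈ {x : ℤ | ∃ h j : ℕ, j ≤ n - 1 ∧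
      x = 2 ^ (h + 1) * (Int.fdiv ((T : ℤ) - 2 ^ h) (2 ^ (h + 1)) - (j : ℤ))
        + 2 ^ h - 1} := by
    rintro x ⟨h, j', hj', rfl⟩ hx
    rw [hfd h] at hx ⊢
    have hp : (0:ℤ) < 2 ^ h := by positivity
    have hpos : 1 ≤ (T : ℤ) / 2 ^ h - (j' : ℤ) := by nlinarith
    obtain ⟨h2, j, hj, heq⟩ := backward_aux (T : ℤ) n hn
      ((T : ℤ) / 2 ^ h - (j' : ℤ)).toNat h j' hj' le_rfl hpos
    exact ⟨h2, j, hj, heq⟩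
  refine ⟨hAC, hCA, ?_⟩
  ext x
  simp only [Set.mem_inter_iff, Set.mem_setOf_eq]
  constructor
  · rintro ⟨hxA, hx⟩; exact ⟨hAC hxA, hx⟩
  · rintro ⟨hxC, hx⟩; exact ⟨hCA x hxC hx, hx⟩
end

section
/- (Tilted gap size ratio given last n items per hanoi value.) Let n, T ∈ ℕ with n ≥ 1 and T ≥ 2. Let V = {x ∈ ℕ : x < T and there exist h ∈ ℕ and j' ∈ ℕ with j' ≤ 2n−1 such that (x : ℤ) = 2^h·(⌊T/2^h⌋ − j') − 1}, and let B ⊆ {0,…,T−1} with V ⊆ B. Then for every T̆ with T̆ < T − 1 and all i, j ∈ ℕ with i ≤ T̆, T̆ + j ≤ T, and {T̆−i, …, T̆+j−1} ∩ B = ∅, we have, as rationals, (i + j)/(T − 1 − T̆) ≤ 1/(n − 1/2); equivalently (2n − 1)·(i + j) ≤ 2·(T − 1 − T̆). That is, the tilted gap size ratio satisfies G_T(T̆)/(T − 1 − T̆) ≤ 1/(n − 1/2) for all T̆ ∈ [0, T−1). -/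
/-- tilted gap size ratio given last `n` items per hanoi value.
If `B` retains the most recent `2n` indices of each hanoi value before `T`,
then every gap `[T'−i, T'+j)` around any `T' < T − 1` satisfies
`(i+j)/(T−1−T') ≤ 1/(n − 1/2)`, equivalently `(2n−1)(i+j) ≤ 2(T−1−T')`. -/
theorem tilted_gap_size_ratio (n T : ℕ) (hn : 1 ≤ n) (hT : 2 ≤ T)
    (V : Set ℕ)
    (hV : V = {x : ℕ | x < T ∧ ∃ h j' : ℕ, j' ≤ 2 * n - 1 ∧
      (x : ℤ) = 2 ^ h * (((T / 2 ^ h : ℕ) : ℤ) - (j' : ℤ)) - 1})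
    (B : Finset ℕ) (hB : B ⊆ Finset.range T) (hVB : ∀ x ∈ V, x ∈ B) :
    ∀ T', T' < T - 1 → ∀ i j : ℕ, i ≤ T' → T' + j ≤ T →
      (∀ x ∈ Finset.Ico (T' - i) (T' + j), x ∉ B) →
      (i + j : ℚ) / ((T : ℚ) - 1 - (T' : ℚ)) ≤ 1 / ((n : ℚ) - 1 / 2) ∧
      (2 * n - 1) * (i + j) ≤ 2 * (T - 1 - T') := by
  subst hV
  obtain ⟨n', rfl⟩ : ∃ n', n = n' + 1 := ⟨n - 1, by omega⟩
  intro T' hT' i j hi hj hgap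
  have key : (2 * (n' + 1) - 1) * (i + j) ≤ 2 * (T - 1 - T') := by
    rcases Nat.eq_zero_or_pos (i + j) with h0 | hpos
    · simp [h0]
    · obtain ⟨g, P, hPg, hP1, hPL, hL2P⟩ :
          ∃ g P, P = 2 ^ g ∧ 1 ≤ P ∧ P ≤ i + j ∧ i + j < 2 * P := by
        refine ⟨Nat.log 2 (i + j), 2 ^ Nat.log 2 (i + j), rfl, Nat.one_le_two_pow,
          Nat.pow_log_le_self 2 (by omega), ?_⟩
        have := Nat.lt_pow_succ_log_self (by norm_num : 1 < 2) (i + j)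
        rw [pow_succ, mul_comm] at this
        exact this
      obtain ⟨q, hPq, hbq⟩ : ∃ q, P * q ≤ T' + j ∧ T' + j < P * q + P := by
        refine ⟨(T' + j) / P, by rw [mul_comm]; exact Nat.div_mul_le_self _ _, ?_⟩
        have h1 := Nat.div_add_mod (T' + j) P
        have h2 := Nat.mod_lt (T' + j) (show 0 < P by omega)
        omega
      obtain ⟨m, hmT, hPm, hTm⟩ : ∃ m, T / P = m ∧ P * m ≤ T ∧ T < P * m + P := by
        refine ⟨T / P, rfl, by rw [mul_comm]; exact Nat.div_mul_le_self _ _, ?_⟩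
        have h1 := Nat.div_add_mod T P
        have h2 := Nat.mod_lt T (show 0 < P by omega)
        omega
      have hqm : q ≤ m := by
        have h : P * q < P * (m + 1) := by
          have e : P * (m + 1) = P * m + P := by ring
          omega
        exact Nat.lt_succ_iff.1 (Nat.lt_of_mul_lt_mul_left h)
      have hxB : (P * q - 1) ∉ B := by
        apply hgap
        rw [Finset.mem_Ico]
        constructor <;> omega
      have hmq : q + 2 * (n' + 1) ≤ m := by
        by_contra hcon
        push_neg at hcon
        apply hxB
        apply hVB
        refine ⟨by omega, g, m - q, by omega, ?_⟩
        have e3 : ((P : ℕ) : ℤ) = 2 ^ g := by rw [hPg]; push_cast; ring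
        rw [show (2 : ℕ) ^ g = P from hPg.symm, hmT, ← e3]
        push_cast [Nat.cast_sub hqm, Nat.cast_sub (show 1 ≤ P * q by omega)]
        ring
      have hmul : P * (q + 2 * (n' + 1)) ≤ P * m := Nat.mul_le_mul_left P hmq
      have hD : P * (2 * n' + 1) ≤ T - 1 - T' := by
        have e1 : P * (q + 2 * (n' + 1)) = P * q + (P * (2 * n' + 1) + P) := by ring
        omega
      calc (2 * (n' + 1) - 1) * (i + j)
          = (2 * n' + 1) * (i + j) := by
            rw [show 2 * (n' + 1) - 1 = 2 * n' + 1 from by omega]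
        _ ≤ (2 * n' + 1) * (2 * P) := Nat.mul_le_mul_left _ (by omega)
        _ = 2 * (P * (2 * n' + 1)) := by ring
        _ ≤ 2 * (T - 1 - T') := by omega
  refine ⟨?_, key⟩
  have hcast : (((2 * (n' + 1) - 1) * (i + j) : ℕ) : ℚ) ≤ ((2 * (T - 1 - T') : ℕ) : ℚ) :=
    Nat.cast_le.2 key
  have e1 : (2 * (n' + 1) - 1 : ℕ) = 2 * n' + 1 := by omega
  have e2 : T - 1 - T' = T - (1 + T') := by omega
  rw [e1, e2] at hcast
  push_cast [Nat.cast_sub (show 1 + T' ≤ T by omega)] at hcast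
  have hD : (0 : ℚ) < (T : ℚ) - 1 - T' := by
    have : (T' : ℚ) + 2 ≤ T := by exact_mod_cast (show T' + 2 ≤ T by omega)
    linarith
  have hn2 : (0 : ℚ) < ((n' + 1 : ℕ) : ℚ) - 1 / 2 := by
    push_cast; linarith [show (0:ℚ) ≤ (n' : ℚ) from Nat.cast_nonneg n']
  rw [div_le_div_iff₀ hD hn2]
  push_cast at hcast ⊢
  nlinarith [hcast]
end

section
/- (Stretched algorithm gap size ratio upper bound, meta-epoch form.) Let ŝ, τ, T ∈ ℕ with ŝ ≥ 2 and τ ≤ ŝ − 1, and set n = 2^(ŝ−1−τ). Let W = {j·2^h − 1 : j, h ∈ ℕ, 1 ≤ j ≤ 2n}, and suppose B ⊆ {0,…,T−1} contains every element of W that is less than T (the retention guarantee of the stretched curation algorithm during meta-epoch τ). Then for every T̆ with 1 ≤ T̆ < T and all i, j ∈ ℕ with i ≤ T̆, T̆ + j ≤ T, and {T̆−i, …, T̆+j−1} ∩ B = ∅, we have, as rationals, (i + j)/T̆ ≤ 2^(τ+1)/2^ŝ. That is, cost_stretched(T) ≤ 2^(τ+1)/S for buffer size S = 2^ŝ. 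-/
/-- stretched algorithm gap size ratio upper bound, meta-epoch
form. With `n = 2^(s'−1−τ)` items retained per hanoi value (the first
`j·2^h − 1 < T` with `1 ≤ j ≤ 2n`), every gap `[T'−i, T'+j)` around any
`1 ≤ T' < T` satisfies `(i+j)/T' ≤ 2^(τ+1)/2^s'` as rationals. -/
theorem stretched_cost_upper_bound (s' τ T n : ℕ) (hs' : 2 ≤ s') (hτ : τ ≤ s' - 1)
    (hn : n = 2 ^ (s' - 1 - τ))
    (B : Finset ℕ) (hB : B ⊆ Finset.range T)
    (hret : ∀ x : ℕ,
      (∃ j h : ℕ, 1 ≤ j ∧ j ≤ 2 * n ∧ x = j * 2 ^ h - 1) → x < T → x ∈ B) :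
    ∀ T', 1 ≤ T' → T' < T → ∀ i j : ℕ, i ≤ T' → T' + j ≤ T →
      (∀ x ∈ Finset.Ico (T' - i) (T' + j), x ∉ B) →
      (i + j : ℚ) / (T' : ℚ) ≤ (2 : ℚ) ^ (τ + 1) / (2 : ℚ) ^ s' := by
  intro T' hT'1 hT'T i j hi hj hgap
  have hn1 : 1 ≤ n := hn ▸ Nat.one_le_two_pow
  -- key combinatorial fact
  have key : n * (i + j) ≤ T' := by
    rcases Nat.eq_zero_or_pos (i + j) with h0 | hL
    · simp [h0]
    · set L := i + j with hLdef
      set h := Nat.log 2 L with hh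
      have h1 : 2 ^ h ≤ L := Nat.pow_log_le_self 2 hL.ne'
      have h2 : L < 2 ^ (h + 1) := Nat.lt_pow_succ_log_self (by norm_num) L
      have hP : 0 < 2 ^ h := Nat.pow_pos (by norm_num)
      set a := T' - i with ha
      set q := a / 2 ^ h with hq
      have hdm : 2 ^ h * q + a % 2 ^ h = a := Nat.div_add_mod a (2 ^ h)
      have hmod : a % 2 ^ h < 2 ^ h := Nat.mod_lt a hP
      set m := 2 ^ h * q + 2 ^ h - 1 with hm
      have hm1 : a ≤ m := by omega
      have hm2 : m < T' + j := by omega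
      have hmB : m ∉ B := hgap m (Finset.mem_Ico.mpr ⟨hm1, hm2⟩)
      have hform : m = (q + 1) * 2 ^ h - 1 := by
        have : (q + 1) * 2 ^ h = 2 ^ h * q + 2 ^ h := by ring
        omega
      have hq3 : 2 * n < q + 1 := by
        by_contra hc
        push_neg at hc
        exact hmB (hret m ⟨q + 1, h, Nat.le_add_left 1 q, hc, hform⟩ (by omega))
      have h4 : 2 * n * 2 ^ h ≤ a := by
        calc 2 * n * 2 ^ h = 2 ^ h * (2 * n) := by ring
          _ ≤ 2 ^ h * q := Nat.mul_le_mul_left _ (by omega)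
          _ ≤ a := by omega
      have h5 : n * L < 2 * n * 2 ^ h := by
        calc n * L < n * 2 ^ (h + 1) := by
              exact mul_lt_mul_of_pos_left h2 (by omega)
          _ = 2 * n * 2 ^ h := by ring
      omega
  -- convert to rationals
  have hs : τ + 1 + (s' - 1 - τ) = s' := by omega
  have hRHS : (2 : ℚ) ^ (τ + 1) / (2 : ℚ) ^ s' = 1 / (n : ℚ) := by
    have h2s : (2 : ℚ) ^ s' = 2 ^ (τ + 1) * 2 ^ (s' - 1 - τ) := by
      rw [← pow_add, hs]
    rw [h2s, hn]
    push_cast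
    rw [div_mul_eq_div_div, div_self (by positivity)]
  rw [hRHS, div_le_div_iff₀ (by exact_mod_cast hT'1) (by exact_mod_cast hn1)]
  have keyQ : (n : ℚ) * (↑i + ↑j) ≤ (T' : ℚ) := by exact_mod_cast key
  nlinarith [keyQ]
end

section
/- (Tilted algorithm gap size ratio upper bound, meta-epoch form.) Let ŝ, τ, T ∈ ℕ with ŝ ≥ 2, τ ≤ ŝ − 1, and T ≥ 2, and set n = 2^(ŝ−1−τ). Let V = {x ∈ ℕ : x < T and there exist h ∈ ℕ and j' ∈ ℕ with j' ≤ 2n−1 such that (x : ℤ) = 2^h·(⌊T/2^h⌋ − j') − 1}, and suppose B ⊆ {0,…,T−1} contains V (the retention guarantee of the tilted curation algorithm during meta-epoch τ). Then for every T̆ with T̆ < T − 1 and all i, j ∈ ℕ with i ≤ T̆, T̆ + j ≤ T, and {T̆−i, …, T̆+j−1} ∩ B = ∅, we have, as rationals, (i + j)/(T − 1 − T̆) ≤ 1/(2^(ŝ−1−τ) − 1/2) = 2^(τ+1)/(2^ŝ − 2^τ). That is, cost_tilted(T) ≤ 1/(S/2^(τ+1) − 1/2) for buffer size S = 2^ŝ.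 -/
set_option maxHeartbeats 1000000


/-- tilted algorithm gap size ratio upper bound, meta-epoch
form. With `n = 2^(s'−1−τ)` and the most recent `2n` indices of each hanoi
value retained, every gap `[T'−i, T'+j)` around any `T' < T − 1` satisfies
`(i+j)/(T−1−T') ≤ 1/(2^(s'−1−τ) − 1/2) = 2^(τ+1)/(2^s' − 2^τ)` as rationals. -/
theorem tilted_cost_upper_bound (s' τ T n : ℕ) (hs' : 2 ≤ s') (hτ : τ ≤ s' - 1)
    (hT : 2 ≤ T) (hn : n = 2 ^ (s' - 1 - τ))
    (V : Set ℕ)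
    (hV : V = {x : ℕ | x < T ∧ ∃ h j' : ℕ, j' ≤ 2 * n - 1 ∧
      (x : ℤ) = 2 ^ h * (((T / 2 ^ h : ℕ) : ℤ) - (j' : ℤ)) - 1})
    (B : Finset ℕ) (hB : B ⊆ Finset.range T) (hVB : ∀ x ∈ V, x ∈ B) :
    ∀ T', T' < T - 1 → ∀ i j : ℕ, i ≤ T' → T' + j ≤ T →
      (∀ x ∈ Finset.Ico (T' - i) (T' + j), x ∉ B) →
      (i + j : ℚ) / ((T : ℚ) - 1 - (T' : ℚ)) ≤
        1 / ((2 : ℚ) ^ (s' - 1 - τ) - 1 / 2) ∧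
      (1 : ℚ) / ((2 : ℚ) ^ (s' - 1 - τ) - 1 / 2) =
        (2 : ℚ) ^ (τ + 1) / ((2 : ℚ) ^ s' - (2 : ℚ) ^ τ) := by
  intro T' hT' i j hi hj hgap
  set m := s' - 1 - τ with hm
  have hn1 : 1 ≤ n := by rw [hn]; exact Nat.one_le_two_pow
  have hTT' : T' + 2 ≤ T := by omega
  have he : (0:ℚ) < (2 : ℚ) ^ m - 1 / 2 := by
    have h1 : (1:ℚ) ≤ 2 ^ m := one_le_pow₀ (by norm_num)
    linarith
  constructor
  · -- main inequality
    -- key natural number inequality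
    have key : (2 * n - 1) * (i + j) ≤ 2 * (T - 1 - T') := by
      rcases Nat.eq_zero_or_pos (i + j) with hg | hg
      · simp [hg]
      · set g := i + j with hgdef
        set h0 := Nat.log 2 g with hh0
        have hP1 : 1 ≤ 2 ^ h0 := Nat.one_le_two_pow
        have hg1 : 2 ^ h0 ≤ g := Nat.pow_log_le_self 2 (by omega)
        have hg2 : g < 2 ^ (h0 + 1) := Nat.lt_pow_succ_log_self (by norm_num) g
        have hg2' : g + 1 ≤ 2 * 2 ^ h0 := by
          rw [pow_succ] at hg2; omega
        set b := T' + j with hb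
        have hbP : 2 ^ h0 ≤ b := by omega
        set k := b / 2 ^ h0 with hk
        have hkb : 2 ^ h0 * k ≤ b := Nat.mul_div_le b (2 ^ h0)
        have hkb2 : b < 2 ^ h0 * k + 2 ^ h0 := by
          have hdm := Nat.div_add_mod b (2 ^ h0)
          have hml := Nat.mod_lt b (show 0 < 2 ^ h0 by omega)
          rw [← hk] at hdm
          omega
        set p := 2 ^ h0 * k - 1 with hp
        have hk1 : 1 ≤ 2 ^ h0 * k := by
          have : 1 ≤ k := by
            rw [hk]; exact (Nat.one_le_div_iff (by omega)).mpr hbP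
          nlinarith
        have hpb : p < b := by omega
        have hpa : T' - i ≤ p := by omega
        have hpB : p ∉ B := hgap p (Finset.mem_Ico.mpr ⟨hpa, hpb⟩)
        have hpT : p < T := lt_of_lt_of_le hpb hj
        have hkT : k ≤ T / 2 ^ h0 := by
          rw [Nat.le_div_iff_mul_le (show 0 < 2 ^ h0 by omega)]
          calc k * 2 ^ h0 = 2 ^ h0 * k := by ring
          _ ≤ b := hkb
          _ ≤ T := hj
        have hj' : 2 * n ≤ T / 2 ^ h0 - k := by
          by_contra hc
          push_neg at hc
          apply hpB
          apply hVB
          rw [hV]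
          refine ⟨hpT, h0, T / 2 ^ h0 - k, by omega, ?_⟩
          have hpk : (p : ℤ) + 1 = (2 : ℤ) ^ h0 * (k : ℤ) := by
            have h1 : p + 1 = 2 ^ h0 * k := by omega
            exact_mod_cast h1
          have e1 : ((T / 2 ^ h0 : ℕ) : ℤ) - ((T / 2 ^ h0 - k : ℕ) : ℤ) = (k : ℤ) := by
            omega
          rw [e1]
          linarith [hpk]
        have hT2 : (k + 2 * n) * 2 ^ h0 ≤ T := by
          rw [← Nat.le_div_iff_mul_le (show 0 < 2 ^ h0 by omega)]
          omega
        -- move to integers and finish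
        zify [show 1 ≤ 2 * n by omega, show T' ≤ T - 1 by omega, show 1 ≤ T by omega]
        have hT2' : ((k : ℤ) + 2 * n) * 2 ^ h0 ≤ (T : ℤ) := by exact_mod_cast hT2
        have hkb2' : (b : ℤ) + 1 ≤ 2 ^ h0 * k + 2 ^ h0 := by exact_mod_cast hkb2
        have hg2'' : (g : ℤ) + 1 ≤ 2 * 2 ^ h0 := by exact_mod_cast hg2'
        have hnn : (0:ℤ) ≤ 2 * (n : ℤ) - 1 := by
          have : (1:ℤ) ≤ (n:ℤ) := by exact_mod_cast hn1
          linarith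
        have hint1 : (2 * (n:ℤ) - 1) * ((g:ℤ) + 1) ≤ (2 * (n:ℤ) - 1) * (2 * 2 ^ h0) :=
          mul_le_mul_of_nonneg_left hg2'' hnn
        have hbb : (b : ℤ) = (T' : ℤ) + (j : ℤ) := by exact_mod_cast hb
        have hgg : (g : ℤ) = (i : ℤ) + (j : ℤ) := by exact_mod_cast hgdef
        nlinarith [hint1, hT2', hkb2', hbb, hgg]
    -- convert to rationals
    have hd : (0:ℚ) < (T : ℚ) - 1 - (T' : ℚ) := by
      have : ((T' : ℚ)) + 2 ≤ (T : ℚ) := by exact_mod_cast hTT'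
      linarith
    rw [div_le_div_iff₀ hd he]
    have keyQ : (2 * (n:ℚ) - 1) * ((i:ℚ) + (j:ℚ)) ≤ 2 * ((T:ℚ) - 1 - (T':ℚ)) := by
      have keyZ : (2 * (n:ℤ) - 1) * ((i:ℤ) + (j:ℤ)) ≤ 2 * ((T:ℤ) - 1 - (T':ℤ)) := by
        zify [show 1 ≤ 2 * n by omega, show T' ≤ T - 1 by omega, show 1 ≤ T by omega] at key
        linarith [key]
      exact_mod_cast keyZ
    have hnq : ((n : ℚ)) = 2 ^ m := by rw [hn]; push_cast; rfl
    rw [hnq] at keyQ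
    linarith
  · -- identity of the two expressions
    have hs'' : s' = m + τ + 1 := by omega
    have h2 : (0:ℚ) < (2 : ℚ) ^ s' - (2 : ℚ) ^ τ := by
      have : (2:ℚ) ^ τ < 2 ^ s' := by
        apply pow_lt_pow_right₀ (by norm_num); omega
      linarith
    rw [div_eq_div_iff (ne_of_gt he) (ne_of_gt h2), one_mul, hs'']
    ring
end
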